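/- Let Ω be a finite nonempty set with distinguished element 0 ∈ Ω, w : Ω → ℝ a nonnegative spatial kernel with w(0) > 0 and Σ_{j∈Ω} w(j) = 1, T > 0, and g : Ω → ℝ with |g(j)| ≤ T and |g(j) − g(0)| ≤ T for all j ∈ Ω. Let φ : ℝ → ℝ be nonnegative with φ(0) = 1, let ψ : ℝ → ℝ satisfy |φ(t) − ψ(t)| ≤ ε for all t ∈ [−T, T], where 0 ≤ ε < w(0). Define P₁ = Σ_{j∈Ω} w(j) φ(g(j) − g(0)) g(j), Q₁ = Σ_{j∈Ω} w(j) φ(g(j) − g(0)), and P₂, Q₂ analogously with ψ in place of φ. Then |P₁/Q₁ − P₂/Q₂| ≤ 2Tε/(w(0) − ε). -/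

import Mathlib

/-- **Per-pixel filtering accuracy of the shiftable bilateral filter.**
If the spatial kernel `w` is nonnegative with `w 0 > 0` and unit total mass,
the image values `g` and the local intensity differences are bounded by `T`,
the range kernel `φ` is nonnegative with `φ 0 = 1`, and `ψ` approximates `φ`
uniformly within `ε < w 0` on `[−T, T]`, then the exact and approximate
bilateral filter outputs differ by at most `2Tε / (w 0 − ε)`. -/
theorem bilateral_filter_accuracy
    {Ω : Type*} [Fintype Ω] (z : Ω) (w : Ω → ℝ)
    (hw : ∀ j, 0 ≤ w j) (hwz : 0 < w z) (hw1 : ∑ j, w j = 1)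
    (T : ℝ) (hT : 0 < T) (g : Ω → ℝ)
    (hg : ∀ j, |g j| ≤ T) (hgz : ∀ j, |g j - g z| ≤ T)
    (φ ψ : ℝ → ℝ) (hφ : ∀ t, 0 ≤ φ t) (hφ0 : φ 0 = 1)
    (ε : ℝ) (hε : 0 ≤ ε) (hεw : ε < w z)
    (happ : ∀ t ∈ Set.Icc (-T) T, |φ t - ψ t| ≤ ε) :
    |(∑ j, w j * φ (g j - g z) * g j) / (∑ j, w j * φ (g j - g z)) -
      (∑ j, w j * ψ (g j - g z) * g j) / (∑ j, w j * ψ (g j - g z))| ≤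
      2 * T * ε / (w z - ε) := by
  set Q₁ := ∑ j, w j * φ (g j - g z) with hQ₁def
  set Q₂ := ∑ j, w j * ψ (g j - g z) with hQ₂def
  set P₁ := ∑ j, w j * φ (g j - g z) * g j with hP₁def
  set P₂ := ∑ j, w j * ψ (g j - g z) * g j with hP₂def
  have hQ1 : w z ≤ Q₁ := by
    have := Finset.single_le_sum (f := fun j => w j * φ (g j - g z))
      (fun j _ => mul_nonneg (hw j) (hφ _)) (Finset.mem_univ z)
    simpa [sub_self, hφ0] using this
  have hQ1pos : 0 < Q₁ := lt_of_lt_of_le hwz hQ1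
  have hQd : |Q₁ - Q₂| ≤ ε := by
    rw [hQ₁def, hQ₂def, ← Finset.sum_sub_distrib]
    calc |∑ j, (w j * φ (g j - g z) - w j * ψ (g j - g z))|
        ≤ ∑ j, |w j * φ (g j - g z) - w j * ψ (g j - g z)| :=
          Finset.abs_sum_le_sum_abs _ _
      _ ≤ ∑ j, w j * ε := by
          apply Finset.sum_le_sum
          intro j _
          rw [← mul_sub, abs_mul, abs_of_nonneg (hw j)]
          exact mul_le_mul_of_nonneg_left
            (happ _ (Set.mem_Icc.mpr (abs_le.mp (hgz j)))) (hw j)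
      _ = ε := by rw [← Finset.sum_mul, hw1, one_mul]
  have hQ2 : w z - ε ≤ Q₂ := by
    have h2 := (abs_le.mp hQd).2
    linarith
  have hQ2pos : 0 < Q₂ := lt_of_lt_of_le (by linarith) hQ2
  have hPd : |P₁ - P₂| ≤ T * ε := by
    rw [hP₁def, hP₂def, ← Finset.sum_sub_distrib]
    calc |∑ j, (w j * φ (g j - g z) * g j - w j * ψ (g j - g z) * g j)|
        ≤ ∑ j, |w j * φ (g j - g z) * g j - w j * ψ (g j - g z) * g j| :=
          Finset.abs_sum_le_sum_abs _ _
      _ ≤ ∑ j, w j * ε * T := by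
          apply Finset.sum_le_sum
          intro j _
          have : w j * φ (g j - g z) * g j - w j * ψ (g j - g z) * g j
              = w j * (φ (g j - g z) - ψ (g j - g z)) * g j := by ring
          rw [this, abs_mul, abs_mul, abs_of_nonneg (hw j)]
          have h1 : |φ (g j - g z) - ψ (g j - g z)| ≤ ε :=
            happ _ (Set.mem_Icc.mpr (abs_le.mp (hgz j)))
          rw [mul_assoc, mul_assoc]
          exact mul_le_mul_of_nonneg_left
            (mul_le_mul h1 (hg j) (abs_nonneg _) hε) (hw j)
      _ = T * ε := by
          rw [← Finset.sum_mul, ← Finset.sum_mul, hw1, one_mul]; ring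
  have hP1 : |P₁| ≤ T * Q₁ := by
    rw [hP₁def]
    calc |∑ j, w j * φ (g j - g z) * g j|
        ≤ ∑ j, |w j * φ (g j - g z) * g j| := Finset.abs_sum_le_sum_abs _ _
      _ ≤ ∑ j, w j * φ (g j - g z) * T := by
          apply Finset.sum_le_sum
          intro j _
          rw [abs_mul, abs_of_nonneg (mul_nonneg (hw j) (hφ _))]
          exact mul_le_mul_of_nonneg_left (hg j) (mul_nonneg (hw j) (hφ _))
      _ = T * Q₁ := by rw [← Finset.sum_mul, hQ₁def]; ring
  have key : P₁ / Q₁ - P₂ / Q₂ = (P₁ * (Q₂ - Q₁) + (P₁ - P₂) * Q₁) / (Q₁ * Q₂) := by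
    field_simp
    ring
  rw [key, abs_div, abs_of_pos (mul_pos hQ1pos hQ2pos)]
  have hnum : |P₁ * (Q₂ - Q₁) + (P₁ - P₂) * Q₁| ≤ 2 * T * ε * Q₁ := by
    calc |P₁ * (Q₂ - Q₁) + (P₁ - P₂) * Q₁|
        ≤ |P₁ * (Q₂ - Q₁)| + |(P₁ - P₂) * Q₁| := abs_add_le _ _
      _ = |P₁| * |Q₂ - Q₁| + |P₁ - P₂| * Q₁ := by
          rw [abs_mul, abs_mul, abs_of_pos hQ1pos]
      _ ≤ (T * Q₁) * ε + (T * ε) * Q₁ := by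
          have h1 : |Q₂ - Q₁| ≤ ε := by rwa [abs_sub_comm]
          have := abs_nonneg P₁
          nlinarith
      _ = 2 * T * ε * Q₁ := by ring
  calc |P₁ * (Q₂ - Q₁) + (P₁ - P₂) * Q₁| / (Q₁ * Q₂)
      ≤ (2 * T * ε * Q₁) / (Q₁ * Q₂) := by
        gcongr
    _ = 2 * T * ε / Q₂ := by
        field_simp
    _ ≤ 2 * T * ε / (w z - ε) := by
        gcongr <;> linarith
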